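/- For p ∈ (5/6, 1), the derivative of π₃(y) = (1−p) + (2p−1)(3y²−2y³) at the fixed points y_± = 1/2 ± (1/2)√((6p−5)/(2p−1)) is strictly less than 1. -/

import Mathlib

lemma aux_deriv (p x : ℝ) :
    deriv (fun y : ℝ => (1 - p) + (2 * p - 1) * (3 * y^2 - 2 * y^3)) x
      = (2 * p - 1) * (6 * x - 6 * x ^ 2) := by
  have h : HasDerivAt (fun y : ℝ => (1 - p) + (2 * p - 1) * (3 * y^2 - 2 * y^3))
      ((2 * p - 1) * (6 * x - 6 * x ^ 2)) x := by
    have := (((hasDerivAt_pow 2 x).const_mul (3:ℝ)).sub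
      ((hasDerivAt_pow 3 x).const_mul (2:ℝ))).const_mul (2 * p - 1)
    convert (this.const_add (1 - p)) using 1
    · rfl
    · rfl
    · rfl
    · norm_num only; ring
  exact h.deriv

theorem stmt_14 (p : ℝ) (hp : p ∈ Set.Ioo (5/6 : ℝ) 1) :
    deriv (fun y : ℝ => (1 - p) + (2 * p - 1) * (3 * y^2 - 2 * y^3))
        (1/2 + (1/2) * Real.sqrt ((6 * p - 5) / (2 * p - 1))) < 1 ∧
    deriv (fun y : ℝ => (1 - p) + (2 * p - 1) * (3 * y^2 - 2 * y^3))
        (1/2 - (1/2) * Real.sqrt ((6 * p - 5) / (2 * p - 1))) < 1 := by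
  obtain ⟨h1, h2⟩ := hp
  have hd : (0:ℝ) < 2 * p - 1 := by linarith
  have hn : (0:ℝ) ≤ 6 * p - 5 := by linarith
  have hsq : Real.sqrt ((6 * p - 5) / (2 * p - 1)) ^ 2 = (6 * p - 5) / (2 * p - 1) :=
    Real.sq_sqrt (div_nonneg hn hd.le)
  set s := Real.sqrt ((6 * p - 5) / (2 * p - 1)) with hs
  have key : (2 * p - 1) * s ^ 2 = 6 * p - 5 := by
    rw [hsq]; field_simp
  constructor <;> rw [aux_deriv] <;> nlinarith [key]
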